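/- Let f(x) = F(x, e^{h(x)}) be an E-polynomial with F ∈ ℤ[X,Y], deg F ≤ d, h ∈ ℤ[X] of degree δ > 0, and H(F), H(h) ≤ H. If f is not identically zero, then every real zero α of f satisfies |α| ≤ 1 + (d+1)H² · max{ (d+1)(1+2H²), 2·⌊2d/δ + 1⌋! }. -/

import Mathlib

/-- Height of an integer polynomial: max absolute value of its coefficients. -/
def heightP (h : Polynomial ℤ) : ℕ := h.support.sup fun i => (h.coeff i).natAbs

/-- Height of an integer bivariate polynomial. -/
def heightM (G : MvPolynomial (Fin 2) ℤ) : ℕ :=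
  G.support.sup fun m => (MvPolynomial.coeff m G).natAbs

lemma myGeomLe (x : ℝ) (hx : 1 < x) (n : ℕ) :
    ∑ i ∈ Finset.range n, x ^ i ≤ x ^ n / (x - 1) := by
  rw [geom_sum_eq (ne_of_gt hx)]
  have h1 : 0 < x - 1 := by linarith
  gcongr <;> linarith

lemma exp_ge_pow (x : ℝ) (hx : 0 ≤ x) (k : ℕ) :
    x ^ k / k.factorial ≤ Real.exp x := by
  have h := Real.sum_le_exp_of_nonneg hx (k + 1)
  refine le_trans ?_ h
  have := Finset.single_le_sum (f := fun i => x ^ i / (i.factorial : ℝ))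
    (fun i _ => by positivity) (Finset.self_mem_range_succ k)
  simpa using this

lemma two_pow_le_fact (k : ℕ) : 2 ^ k ≤ (k + 1).factorial := by
  induction k with
  | zero => simp
  | succ n ih =>
    rw [pow_succ, Nat.factorial_succ]
    calc 2 ^ n * 2 ≤ (n+1).factorial * 2 := by omega
    _ ≤ (n + 2) * (n+1).factorial := by nlinarith [Nat.factorial_pos (n+1)]

lemma poly_lower (h : Polynomial ℤ) (δ H : ℕ) (hδ : h.natDegree = δ) (hδ0 : 0 < δ)
    (hHh : heightP h ≤ H) (hH : 1 ≤ H) (α : ℝ) (hx : 1 + 4*(H:ℝ) ≤ |α|) :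
    |α| ^ δ / 2 ≤ |Polynomial.aeval α h| := by
  set x := |α| with hxdef
  have hH1 : (1:ℝ) ≤ H := by exact_mod_cast hH
  have hx1 : (1:ℝ) < x := by linarith
  have hh0 : h ≠ 0 := by
    intro h0
    rw [h0] at hδ
    simp at hδ
    omega
  have hcoeff : ∀ i, |(h.coeff i : ℝ)| ≤ H := by
    intro i
    by_cases hi : i ∈ h.support
    · have h1 : (h.coeff i).natAbs ≤ heightP h :=
        Finset.le_sup (f := fun i => (h.coeff i).natAbs) hi
      have h2 : (h.coeff i).natAbs ≤ H := le_trans h1 hHh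
      have h3 : |h.coeff i| ≤ (H:ℤ) := by
        rw [Int.abs_eq_natAbs]
        exact_mod_cast h2
      exact_mod_cast h3
    · rw [Polynomial.notMem_support_iff.1 hi]
      simp
  have hlead : (1:ℝ) ≤ |(h.coeff δ : ℝ)| := by
    have h1 : h.coeff δ ≠ 0 := by
      rw [← hδ]
      show h.leadingCoeff ≠ 0
      exact Polynomial.leadingCoeff_ne_zero.2 hh0
    exact_mod_cast Int.one_le_abs h1
  have hexpand : Polynomial.aeval α h
      = ∑ i ∈ Finset.range (δ+1), (h.coeff i : ℝ) * α ^ i := by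
    rw [Polynomial.aeval_eq_sum_range, hδ]
    exact Finset.sum_congr rfl (fun i _ => by rw [zsmul_eq_mul])
  rw [hexpand, Finset.sum_range_succ]
  set A := ∑ i ∈ Finset.range δ, (h.coeff i : ℝ) * α ^ i with hA
  set B := (h.coeff δ : ℝ) * α ^ δ with hB
  have habsA : |A| ≤ x ^ δ / 4 := by
    have h1 : |A| ≤ ∑ i ∈ Finset.range δ, (H:ℝ) * x ^ i := by
      refine le_trans (Finset.abs_sum_le_sum_abs _ _) (Finset.sum_le_sum ?_)
      intro i _
      rw [abs_mul, abs_pow, ← hxdef]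
      exact mul_le_mul_of_nonneg_right (hcoeff i) (by positivity)
    have h2 : ∑ i ∈ Finset.range δ, (H:ℝ) * x ^ i = H * ∑ i ∈ Finset.range δ, x ^ i := by
      rw [Finset.mul_sum]
    have h3 : (H:ℝ) * ∑ i ∈ Finset.range δ, x ^ i ≤ H * (x ^ δ / (x-1)) :=
      mul_le_mul_of_nonneg_left (myGeomLe x hx1 δ) (by positivity)
    have h4 : (H:ℝ) * (x ^ δ / (x-1)) ≤ x ^ δ / 4 := by
      have hx4 : (0:ℝ) < x - 1 := by linarith
      rw [← mul_div_assoc, div_le_div_iff₀ hx4 (by norm_num : (0:ℝ) < 4)]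
      have h9 : (0:ℝ) ≤ x ^ δ * ((x - 1) - 4*H) :=
        mul_nonneg (by positivity) (by linarith)
      nlinarith [h9]
    linarith [h1, h2 ▸ h1]
  have habsB : x ^ δ ≤ |B| := by
    rw [hB, abs_mul, abs_pow, ← hxdef]
    nlinarith [pow_pos (by linarith : (0:ℝ) < x) δ, hlead]
  have h7 : |B| ≤ |A + B| + |A| := by
    have := abs_add_le (A + B) (-A)
    simpa using this
  have hx2 : (0:ℝ) < x ^ δ := pow_pos (by linarith) δ
  linarith

set_option maxHeartbeats 2000000 in
lemma exp_lower (d δ H : ℕ) (hδ0 : 0 < δ) (hd1 : 1 ≤ d) (hH : 1 ≤ H) (x s : ℝ)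
    (hx2 : 1 + 2*((d:ℝ)+1)*(H:ℝ)^2*((Nat.factorial (2*d/δ+1) : ℕ) : ℝ) ≤ x)
    (hs : x ^ δ / 2 ≤ s) :
    2*((d:ℝ)+1)^2*(H:ℝ)*x^d ≤ Real.exp s := by
  obtain ⟨k, hk⟩ : ∃ k, k = 2*d/δ+1 := ⟨_, rfl⟩
  obtain ⟨K, hK⟩ : ∃ K : ℝ, K = ((Nat.factorial k : ℕ) : ℝ) := ⟨_, rfl⟩
  rw [← hk, ← hK] at hx2
  have hK1 : (1:ℝ) ≤ K := by
    rw [hK]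
    exact_mod_cast Nat.one_le_iff_ne_zero.2 (Nat.factorial_ne_zero k)
  have hH1 : (1:ℝ) ≤ H := by exact_mod_cast hH
  have hD1 : (1:ℝ) ≤ (d:ℝ) := by exact_mod_cast hd1
  have a1 : (1:ℝ) ≤ (H:ℝ)^2 := by nlinarith
  have c1 : (1:ℝ) ≤ (H:ℝ)^2*K := by nlinarith [a1, hK1]
  have hstep : (1:ℝ) ≤ ((d:ℝ)+1)*((H:ℝ)^2*K) := by nlinarith [c1, hD1]
  have hx1 : (1:ℝ) < x := by nlinarith [hstep, hx2]
  have hx0 : (0:ℝ) < x := by linarith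
  have hδk : 2*d+1 ≤ δ*k := by
    have h1 := Nat.div_add_mod (2*d) δ
    have h2 := Nat.mod_lt (2*d) hδ0
    have h3 : δ*k = δ*(2*d/δ) + δ := by rw [hk]; ring
    omega
  have hx2k : 2*(2:ℝ)^k ≤ x := by
    have h1 : (2:ℕ)^(2*d/δ) ≤ Nat.factorial k := by rw [hk]; exact two_pow_le_fact (2*d/δ)
    have h2 : (2:ℝ)^(2*d/δ) ≤ K := by rw [hK]; exact_mod_cast h1
    have h3 : (2:ℝ)^k = 2*(2:ℝ)^(2*d/δ) := by rw [hk, pow_succ]; ring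
    have h4 : (0:ℝ) ≤ 2*K*(((d:ℝ)+1)*(H:ℝ)^2 - 2) := by
      apply mul_nonneg (by positivity)
      nlinarith [hD1, a1]
    nlinarith [h2, hx2, h4, h3]
  have hxd1 : ((d:ℝ)+1)^2*H*K ≤ x^d := by
    rcases eq_or_lt_of_le hd1 with h1 | h2
    · have hd : d = 1 := h1.symm
      subst hd
      have h5 : (0:ℝ) ≤ 4*(H:ℝ)*K*((H:ℝ)-1) :=
        mul_nonneg (by positivity) (by linarith)
      push_cast
      push_cast at hx2
      nlinarith [hx2, h5]
    · have hxsq : x^2 ≤ x^d := pow_le_pow_right₀ (le_of_lt hx1) (by omega)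
      have e : (1+2*((d:ℝ)+1)*H^2*K)^2 ≤ x^2 := by
        apply pow_le_pow_left₀ (by positivity) hx2
      have b1 : (1:ℝ) ≤ (H:ℝ)^3 := by
        calc (1:ℝ) = 1^3 := by norm_num
        _ ≤ (H:ℝ)^3 := pow_le_pow_left₀ zero_le_one hH1 3
      have h6 : (1:ℝ) ≤ H^3*K := by nlinarith [b1, hK1]
      have h7 : (0:ℝ) ≤ (((d:ℝ)+1)^2*H*K)*(4*H^3*K-1) :=
        mul_nonneg (by positivity) (by linarith)
      nlinarith [hxsq, e, h7]
  have hpos : (0:ℝ) < (2:ℝ)^k * K := by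
    apply mul_pos (by positivity) (by linarith)
  have key : 2*((d:ℝ)+1)^2*H*x^d * ((2:ℝ)^k * K) ≤ x^(δ*k) := by
    have e1 : x^(2*d+1) ≤ x^(δ*k) := pow_le_pow_right₀ (le_of_lt hx1) hδk
    have e2 : x^(2*d+1) = x^d * x^d * x := by rw [two_mul, pow_succ, pow_add]
    have e3 : (((d:ℝ)+1)^2*H*K) * (2*(2:ℝ)^k) ≤ x^d * x := by
      apply mul_le_mul hxd1 hx2k (by positivity) (by positivity)
    have e4 : x^d * ((((d:ℝ)+1)^2*H*K) * (2*(2:ℝ)^k)) ≤ x^d * (x^d * x) :=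
      mul_le_mul_of_nonneg_left e3 (by positivity)
    calc 2*((d:ℝ)+1)^2*H*x^d*((2:ℝ)^k * K)
        = x^d * ((((d:ℝ)+1)^2*H*K) * (2*(2:ℝ)^k)) := by ring
      _ ≤ x^d * (x^d * x) := e4
      _ = x^(2*d+1) := by rw [e2]; ring
      _ ≤ x^(δ*k) := e1
  have hxδ2 : (0:ℝ) ≤ x^δ/2 := by positivity
  calc 2*((d:ℝ)+1)^2*(H:ℝ)*x^d ≤ x^(δ*k) / ((2:ℝ)^k * K) := by
        rw [le_div_iff₀ hpos]; exact key
    _ = (x^δ/2)^k / K := by rw [div_pow, ← pow_mul, div_div]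
    _ ≤ Real.exp (x^δ/2) := by rw [hK]; exact exp_ge_pow _ hxδ2 k
    _ ≤ Real.exp s := Real.exp_le_exp.2 hs
open Finset in
open Finset in
lemma aux_ne (S : Finset (Fin 2 →₀ ℕ)) (c : (Fin 2 →₀ ℕ) → ℤ) (d H : ℕ)
    (α t : ℝ)
    (hc0 : ∀ m ∈ S, c m ≠ 0)
    (hHc : ∀ m ∈ S, |(c m : ℝ)| ≤ H)
    (hd0 : ∀ m ∈ S, m 0 ≤ d)
    (hcard : S.card ≤ (d + 1) ^ 2)
    (J : ℕ) (hJex : ∃ m ∈ S, m 1 = J)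
    (hkey : ∀ m ∈ S, m 1 ≠ J →
      Real.exp t ^ (m 1) ≤ Real.exp t ^ J / Real.exp |t|)
    (hexp : 2 * ((d : ℝ) + 1) ^ 2 * H * |α| ^ d ≤ Real.exp |t|)
    (hx : 1 + 4 * (H : ℝ) ≤ |α|) (hH : 1 ≤ H) :
    ∑ m ∈ S, (c m : ℝ) * α ^ (m 0) * Real.exp t ^ (m 1) ≠ 0 := by
  classical
  set x := |α| with hxdef
  set E := Real.exp t with hEdef
  have hH1 : (1 : ℝ) ≤ H := by exact_mod_cast hH
  have hx1 : (1 : ℝ) < x := by linarith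
  have hx0 : (0 : ℝ) < x := by linarith
  have hE0 : 0 < E := Real.exp_pos t
  have hexp0 : (0:ℝ) < Real.exp |t| := Real.exp_pos _
  -- pick the dominant monomial
  have hTne : (S.filter (fun m => m 1 = J)).Nonempty := by
    obtain ⟨m, hm, hm1⟩ := hJex
    exact ⟨m, Finset.mem_filter.2 ⟨hm, hm1⟩⟩
  obtain ⟨ms, hmsT, hMs⟩ := Finset.exists_mem_eq_sup _ hTne (fun m => m 0)
  have hmsS : ms ∈ S := (Finset.mem_filter.1 hmsT).1
  have hms1 : ms 1 = J := (Finset.mem_filter.1 hmsT).2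
  have huniq : ∀ m ∈ S, m 1 = J → m 0 = ms 0 → m = ms := by
    intro m hm h1 h0
    ext i
    fin_cases i
    · show m 0 = ms 0; exact h0
    · show m 1 = ms 1; rw [h1, hms1]
  have hxM1 : (1:ℝ) ≤ x ^ ms 0 := by
    calc (1:ℝ) = 1 ^ ms 0 := (one_pow _).symm
    _ ≤ x ^ ms 0 := pow_le_pow_left₀ (by norm_num) (le_of_lt hx1) _
  have hEJ0 : (0:ℝ) < E ^ J := pow_pos hE0 J
  have hX0 : (0:ℝ) < x ^ ms 0 * E ^ J := by positivity
  -- main term lower bound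
  have hmain : x ^ ms 0 * E ^ J ≤ |(c ms : ℝ) * α ^ ms 0 * E ^ ms 1| := by
    rw [abs_mul, abs_mul, abs_pow, abs_pow, abs_of_pos hE0, ← hxdef, hms1]
    have h1 : (1:ℝ) ≤ |(c ms : ℝ)| := by
      have := Int.one_le_abs (hc0 ms hmsS)
      exact_mod_cast this
    nlinarith [pow_pos hE0 J, hxM1]
  -- rest bound
  have habs : ∀ m : Fin 2 →₀ ℕ, |(c m : ℝ) * α ^ m 0 * E ^ m 1|
      = |(c m : ℝ)| * x ^ m 0 * E ^ m 1 := by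
    intro m
    rw [abs_mul, abs_mul, abs_pow, abs_pow, abs_of_pos hE0, ← hxdef]
  have hrest : ∑ m ∈ S.erase ms, |(c m : ℝ) * α ^ m 0 * E ^ m 1|
      ≤ 3/4 * (x ^ ms 0 * E ^ J) := by
    have hA : ∑ m ∈ (S.erase ms).filter (fun m => m 1 = J),
        |(c m : ℝ) * α ^ m 0 * E ^ m 1| ≤ 1/4 * (x ^ ms 0 * E ^ J) := by
      have h1 : ∑ m ∈ (S.erase ms).filter (fun m => m 1 = J),
          |(c m : ℝ) * α ^ m 0 * E ^ m 1|
          ≤ ∑ m ∈ (S.erase ms).filter (fun m => m 1 = J), H * (x ^ m 0 * E ^ J) := by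
        apply Finset.sum_le_sum
        intro m hm
        obtain ⟨hmer, hm1⟩ := Finset.mem_filter.1 hm
        have hmS := Finset.mem_of_mem_erase hmer
        rw [habs m, hm1, mul_assoc]
        exact mul_le_mul_of_nonneg_right (hHc m hmS) (by positivity)
      refine le_trans h1 ?_
      have h2 : ∑ m ∈ (S.erase ms).filter (fun m => m 1 = J), (x:ℝ) ^ m 0
          ≤ x ^ ms 0 / (x - 1) := by
        have hinj : ∀ m ∈ (S.erase ms).filter (fun m => m 1 = J),
            ∀ m' ∈ (S.erase ms).filter (fun m => m 1 = J), m 0 = m' 0 → m = m' := by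
          intro m hm m' hm' he
          obtain ⟨hmer, hm1⟩ := Finset.mem_filter.1 hm
          obtain ⟨hmer', hm1'⟩ := Finset.mem_filter.1 hm'
          ext i
          fin_cases i
          · show m 0 = m' 0; exact he
          · show m 1 = m' 1; rw [hm1, hm1']
        rw [← Finset.sum_image hinj]
        refine le_trans (Finset.sum_le_sum_of_subset_of_nonneg ?_
          (fun i _ _ => by positivity)) (myGeomLe x hx1 (ms 0))
        intro i hi
        obtain ⟨m, hm, rfl⟩ := Finset.mem_image.1 hi
        obtain ⟨hmer, hm1⟩ := Finset.mem_filter.1 hm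
        have hmS := Finset.mem_of_mem_erase hmer
        have hne := Finset.ne_of_mem_erase hmer
        have hle : m 0 ≤ ms 0 := by
          rw [← hMs]
          have hmT : m ∈ S.filter (fun m => m 1 = J) := Finset.mem_filter.2 ⟨hmS, hm1⟩
          exact Finset.le_sup (f := fun m => m 0) hmT
        have hne2 : m 0 ≠ ms 0 := fun he => hne (huniq m hmS hm1 he)
        exact Finset.mem_range.2 (lt_of_le_of_ne hle hne2)
      have h3 : ∑ m ∈ (S.erase ms).filter (fun m => m 1 = J), (H:ℝ) * (x ^ m 0 * E ^ J)
          = (H:ℝ) * E ^ J * ∑ m ∈ (S.erase ms).filter (fun m => m 1 = J), x ^ m 0 := by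
        rw [Finset.mul_sum]
        exact Finset.sum_congr rfl (fun m _ => by ring)
      rw [h3]
      have h4 : (H:ℝ) * E ^ J * (x ^ ms 0 / (x - 1)) ≤ 1/4 * (x ^ ms 0 * E ^ J) := by
        have hx1' : (0:ℝ) < x - 1 := by linarith
        rw [div_eq_mul_inv]
        have h5 : (H:ℝ) * (x - 1)⁻¹ ≤ 1/4 := by
          rw [← div_eq_mul_inv, div_le_iff₀ hx1']
          linarith
        have h6 : (0:ℝ) ≤ E ^ J * x ^ ms 0 := by positivity
        calc (H:ℝ) * E ^ J * (x ^ ms 0 * (x - 1)⁻¹)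
            = ((H:ℝ) * (x - 1)⁻¹) * (E ^ J * x ^ ms 0) := by ring
          _ ≤ 1/4 * (E ^ J * x ^ ms 0) := mul_le_mul_of_nonneg_right h5 h6
          _ = 1/4 * (x ^ ms 0 * E ^ J) := by ring
      calc (H:ℝ) * E ^ J * ∑ m ∈ (S.erase ms).filter (fun m => m 1 = J), x ^ m 0
          ≤ (H:ℝ) * E ^ J * (x ^ ms 0 / (x - 1)) :=
            mul_le_mul_of_nonneg_left h2 (by positivity)
      _ ≤ 1/4 * (x ^ ms 0 * E ^ J) := h4
    have hB : ∑ m ∈ (S.erase ms).filter (fun m => ¬ m 1 = J),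
        |(c m : ℝ) * α ^ m 0 * E ^ m 1| ≤ 1/2 * (x ^ ms 0 * E ^ J) := by
      have hterm : ∀ m ∈ (S.erase ms).filter (fun m => ¬ m 1 = J),
          |(c m : ℝ) * α ^ m 0 * E ^ m 1| ≤ (H:ℝ) * x ^ d * (E ^ J / Real.exp |t|) := by
        intro m hm
        obtain ⟨hmer, hm1⟩ := Finset.mem_filter.1 hm
        have hmS := Finset.mem_of_mem_erase hmer
        rw [habs m]
        have hc := hHc m hmS
        have hxp : x ^ m 0 ≤ x ^ d := pow_le_pow_right₀ (le_of_lt hx1) (hd0 m hmS)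
        have hEp := hkey m hmS hm1
        have s1 : |(c m : ℝ)| * x ^ m 0 ≤ (H:ℝ) * x ^ d :=
          mul_le_mul hc hxp (by positivity) (by positivity)
        exact mul_le_mul s1 hEp (by positivity) (by positivity)
      have h2 := Finset.sum_le_card_nsmul _ _ _ hterm
      rw [nsmul_eq_mul] at h2
      refine le_trans h2 ?_
      have hcd : (((S.erase ms).filter (fun m => ¬ m 1 = J)).card : ℝ) ≤ ((d:ℝ)+1)^2 := by
        have hc1 : ((S.erase ms).filter (fun m => ¬ m 1 = J)).card ≤ S.card :=
          Finset.card_le_card (fun m hm =>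
            Finset.mem_of_mem_erase (Finset.mem_filter.1 hm).1)
        have := le_trans hc1 hcard
        calc (((S.erase ms).filter (fun m => ¬ m 1 = J)).card : ℝ)
            ≤ (((d+1)^2 : ℕ) : ℝ) := by exact_mod_cast this
          _ = ((d:ℝ)+1)^2 := by push_cast; ring
      have hden : (0:ℝ) < 2 * ((d : ℝ) + 1) ^ 2 * H * x ^ d := by positivity
      have h5 : E ^ J / Real.exp |t| ≤ E ^ J / (2 * ((d : ℝ) + 1) ^ 2 * H * x ^ d) :=
        div_le_div_of_nonneg_left (le_of_lt hEJ0) hden hexp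
      have h6 : ((d:ℝ)+1)^2 * ((H:ℝ) * x ^ d * (E ^ J / (2 * ((d : ℝ) + 1) ^ 2 * H * x ^ d)))
          = E ^ J / 2 := by
        have hd1 : ((d:ℝ)+1) ≠ 0 := by positivity
        have hH0 : (H:ℝ) ≠ 0 := by positivity
        have hxd : (x:ℝ) ^ d ≠ 0 := by positivity
        field_simp
      calc (((S.erase ms).filter (fun m => ¬ m 1 = J)).card : ℝ)
            * ((H:ℝ) * x ^ d * (E ^ J / Real.exp |t|))
          ≤ ((d:ℝ)+1)^2 * ((H:ℝ) * x ^ d * (E ^ J / Real.exp |t|)) :=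
            mul_le_mul_of_nonneg_right hcd (by positivity)
        _ ≤ ((d:ℝ)+1)^2 * ((H:ℝ) * x ^ d * (E ^ J / (2 * ((d : ℝ) + 1) ^ 2 * H * x ^ d))) := by
            apply mul_le_mul_of_nonneg_left _ (by positivity)
            exact mul_le_mul_of_nonneg_left h5 (by positivity)
        _ = E ^ J / 2 := h6
        _ ≤ 1/2 * (x ^ ms 0 * E ^ J) := by nlinarith [hEJ0, hxM1]
    have hsplit := Finset.sum_filter_add_sum_filter_not (S.erase ms)
      (fun m => m 1 = J) (fun m => |(c m : ℝ) * α ^ m 0 * E ^ m 1|)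
    rw [← hsplit]
    linarith
  -- conclude
  intro h0
  have hsum := Finset.add_sum_erase S (fun m => (c m : ℝ) * α ^ m 0 * E ^ m 1) hmsS
  rw [h0] at hsum
  have hmain2 : (c ms : ℝ) * α ^ ms 0 * E ^ ms 1
      = - ∑ m ∈ S.erase ms, (c m : ℝ) * α ^ m 0 * E ^ m 1 := by linarith
  have h1 : |(c ms : ℝ) * α ^ ms 0 * E ^ ms 1| ≤ 3/4 * (x ^ ms 0 * E ^ J) := by
    rw [hmain2, abs_neg]
    exact le_trans (Finset.abs_sum_le_sum_abs _ _) hrest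
  have h2 : x ^ ms 0 * E ^ J ≤ 3/4 * (x ^ ms 0 * E ^ J) := le_trans hmain h1
  linarith

set_option maxHeartbeats 1000000 in
theorem stmt_14 (F : MvPolynomial (Fin 2) ℤ) (h : Polynomial ℤ) (d δ H : ℕ)
    (hd : F.totalDegree ≤ d) (hδ : h.natDegree = δ) (hδ0 : 0 < δ)
    (hHF : heightM F ≤ H) (hHh : heightP h ≤ H)
    (f : ℝ → ℝ)
    (hf : f = fun x => MvPolynomial.aeval ![x, Real.exp (Polynomial.aeval x h)] F)
    (hfne : ∃ x : ℝ, f x ≠ 0) :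
    ∀ α : ℝ, f α = 0 →
      |α| ≤ 1 + (((d + 1) * H ^ 2 *
        max ((d + 1) * (1 + 2 * H ^ 2)) (2 * Nat.factorial (2 * d / δ + 1)) : ℕ) : ℝ) := by
  classical
  intro α hα
  by_contra hgt
  push_neg at hgt
  have hF0 : F ≠ 0 := by
    rintro rfl
    obtain ⟨x0, hx0⟩ := hfne
    apply hx0
    rw [hf]
    simp
  have hsupp : F.support.Nonempty := MvPolynomial.support_nonempty.2 hF0
  have hh0 : h ≠ 0 := by
    intro h0
    rw [h0] at hδ
    simp at hδ
    omega
  have hH1 : 1 ≤ H := by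
    have h1 : h.coeff δ ≠ 0 := by
      rw [← hδ]
      show h.leadingCoeff ≠ 0
      exact Polynomial.leadingCoeff_ne_zero.2 hh0
    have h2 : δ ∈ h.support := Polynomial.mem_support_iff.2 h1
    calc 1 ≤ (h.coeff δ).natAbs := Int.natAbs_pos.2 h1
    _ ≤ heightP h := Finset.le_sup (f := fun i => (h.coeff i).natAbs) h2
    _ ≤ H := hHh
  set t := Polynomial.aeval α h with htdef
  have hfa : f α = ∑ m ∈ F.support,
      ((MvPolynomial.coeff m F : ℤ) : ℝ) * α ^ (m 0) * Real.exp t ^ (m 1) := by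
    rw [hf]
    show MvPolynomial.aeval ![α, Real.exp t] F = _
    rw [MvPolynomial.aeval_def, MvPolynomial.eval₂_eq']
    apply Finset.sum_congr rfl
    intro m _
    rw [Fin.prod_univ_two]
    simp only [Matrix.cons_val_zero, Matrix.cons_val_one, Matrix.head_cons, eq_intCast]
    ring
  rw [hfa] at hα
  have hc0 : ∀ m ∈ F.support, MvPolynomial.coeff m F ≠ 0 :=
    fun m hm => MvPolynomial.mem_support_iff.1 hm
  have hHc : ∀ m ∈ F.support, |((MvPolynomial.coeff m F : ℤ) : ℝ)| ≤ H := by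
    intro m hm
    have h1 : (MvPolynomial.coeff m F).natAbs ≤ heightM F :=
      Finset.le_sup (f := fun m => (MvPolynomial.coeff m F).natAbs) hm
    have h2 : |MvPolynomial.coeff m F| ≤ (H:ℤ) := by
      rw [Int.abs_eq_natAbs]
      exact_mod_cast le_trans h1 hHF
    exact_mod_cast h2
  have hmd : ∀ m ∈ F.support, m 0 + m 1 ≤ d := by
    intro m hm
    have h1 := MvPolynomial.le_totalDegree hm
    have h2 : (m.sum fun _ e => e) = m 0 + m 1 := by
      rw [Finsupp.sum_fintype _ _ (fun _ => rfl), Fin.sum_univ_two]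
    rw [h2] at h1
    omega
  have hd0' : ∀ m ∈ F.support, m 0 ≤ d := fun m hm => by have := hmd m hm; omega
  rcases Nat.eq_zero_or_pos d with hdz | hdpos
  · subst hdz
    have hsing : F.support = {0} := by
      apply Finset.eq_singleton_iff_nonempty_unique_mem.2
      refine ⟨hsupp, ?_⟩
      intro m hm
      have h1 := hmd m hm
      ext i
      fin_cases i
      · show m 0 = (0 : Fin 2 →₀ ℕ) 0
        simp
        omega
      · show m 1 = (0 : Fin 2 →₀ ℕ) 1
        simp
        omega
    rw [hsing, Finset.sum_singleton] at hα
    simp at hα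
    exact hc0 0 (hsing ▸ Finset.mem_singleton_self 0) (by exact_mod_cast hα)
  have hcard : F.support.card ≤ (d+1)^2 := by
    have h1 : ∀ m ∈ F.support,
        (fun m : Fin 2 →₀ ℕ => (m 0, m 1)) m ∈ Finset.range (d+1) ×ˢ Finset.range (d+1) := by
      intro m hm
      have := hmd m hm
      simp only [Finset.mem_product, Finset.mem_range]
      omega
    have h2 : Set.InjOn (fun m : Fin 2 →₀ ℕ => (m 0, m 1)) F.support := by
      intro m hm m' hm' he
      have he1 : m 0 = m' 0 := congrArg Prod.fst he
      have he2 : m 1 = m' 1 := congrArg Prod.snd he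
      ext i
      fin_cases i
      · exact he1
      · exact he2
    have h3 := Finset.card_le_card_of_injOn _ h1 h2
    simpa [Finset.card_product, Finset.card_range, pow_two] using h3
  set x := |α| with hxdef
  -- extract the two real inequalities from hgt
  have hA : ((d+1)*H^2*((d + 1) * (1 + 2 * H ^ 2)) : ℕ)
      ≤ ((d+1)*H^2*(max ((d + 1) * (1 + 2 * H ^ 2)) (2 * Nat.factorial (2 * d / δ + 1))) : ℕ) :=
    Nat.mul_le_mul_left _ (le_max_left _ _)
  have hB : ((d+1)*H^2*(2 * Nat.factorial (2 * d / δ + 1)) : ℕ)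
      ≤ ((d+1)*H^2*(max ((d + 1) * (1 + 2 * H ^ 2)) (2 * Nat.factorial (2 * d / δ + 1))) : ℕ) :=
    Nat.mul_le_mul_left _ (le_max_right _ _)
  have hAc := (Nat.cast_le (α := ℝ)).2 hA
  have hBc := (Nat.cast_le (α := ℝ)).2 hB
  have hx1R : 1 + (((d:ℝ)+1)*(H:ℝ)^2*(((d:ℝ) + 1) * (1 + 2 * (H:ℝ) ^ 2))) ≤ x := by
    push_cast at hAc
    push_cast at hgt
    linarith
  have hx2R : 1 + 2*((d:ℝ)+1)*(H:ℝ)^2*((Nat.factorial (2*d/δ+1) : ℕ) : ℝ) ≤ x := by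
    push_cast at hBc
    push_cast at hgt
    linarith
  have hH1R : (1:ℝ) ≤ (H:ℝ) := by exact_mod_cast hH1
  have hD1R : (1:ℝ) ≤ (d:ℝ) := by exact_mod_cast hdpos
  have hxH : 1 + 4*(H:ℝ) ≤ x := by
    have q1 : (4:ℝ) ≤ ((d:ℝ)+1)^2 := by nlinarith [hD1R]
    have q2 : (1:ℝ) ≤ 1+2*(H:ℝ)^2 := by nlinarith [sq_nonneg (H:ℝ)]
    have q3 : (4:ℝ) ≤ ((d:ℝ)+1)^2*(1+2*(H:ℝ)^2) := by nlinarith [q1, q2]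
    have p1 : 4*(H:ℝ)^2 ≤ (H:ℝ)^2*(((d:ℝ)+1)^2*(1+2*(H:ℝ)^2)) := by
      nlinarith [q3, sq_nonneg (H:ℝ)]
    have p2 : (H:ℝ) ≤ (H:ℝ)^2 := by nlinarith [hH1R]
    nlinarith [hx1R, p1, p2]
  have ht2 : x ^ δ / 2 ≤ |t| := poly_lower h δ H hδ hδ0 hHh hH1 α hxH
  have hexpb : 2*((d:ℝ)+1)^2*(H:ℝ)*x^d ≤ Real.exp |t| :=
    exp_lower d δ H hδ0 hdpos hH1 x |t| hx2R ht2
  rcases le_or_gt 0 t with htpos | htneg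
  · obtain ⟨mJ, hmJ, hJeq⟩ := Finset.exists_mem_eq_sup F.support hsupp (fun m => m 1)
    refine absurd hα (aux_ne F.support (fun m => MvPolynomial.coeff m F) d H α t hc0 hHc
      hd0' hcard (F.support.sup (fun m => m 1)) ⟨mJ, hmJ, hJeq.symm⟩ ?_ hexpb hxH hH1)
    intro m hm hne
    have hle : m 1 ≤ F.support.sup (fun m => m 1) := Finset.le_sup (f := fun m => m 1) hm
    have hlt : m 1 + 1 ≤ F.support.sup (fun m => m 1) := by omega
    have hE1 : (1:ℝ) ≤ Real.exp t := Real.one_le_exp htpos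
    rw [abs_of_nonneg htpos, le_div_iff₀ (Real.exp_pos t), ← pow_succ]
    exact pow_le_pow_right₀ hE1 hlt
  · obtain ⟨mJ, hmJ, hJeq⟩ := Finset.exists_mem_eq_inf' hsupp (fun m => m 1)
    refine absurd hα (aux_ne F.support (fun m => MvPolynomial.coeff m F) d H α t hc0 hHc
      hd0' hcard (F.support.inf' hsupp (fun m => m 1)) ⟨mJ, hmJ, hJeq.symm⟩ ?_ hexpb hxH hH1)
    intro m hm hne
    have hge : F.support.inf' hsupp (fun m => m 1) ≤ m 1 :=
      Finset.inf'_le _ hm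
    have hgt' : F.support.inf' hsupp (fun m => m 1) + 1 ≤ m 1 := by omega
    have hE1 : Real.exp t ≤ 1 := by
      rw [← Real.exp_zero]
      exact Real.exp_le_exp.2 (le_of_lt htneg)
    rw [abs_of_neg htneg, Real.exp_neg, div_eq_mul_inv, inv_inv, ← pow_succ]
    exact pow_le_pow_of_le_one (le_of_lt (Real.exp_pos t)) hE1 hgt'
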